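/- Let A : Cube^op → 𝒜 be a cubical object in a pseudo-abelian category, and define d_n := Σ_{i=1}^{n+1} (−1)^i (δ_{i,1}^{n*} − δ_{i,0}^{n*}) : A_{n+1} → A_n. Then d_{n−1} ∘ d_n = 0, so (A_•, d) is a chain complex; moreover A_•^{deg} and A_•^ν are subcomplexes, and the complexes A_•/A_•^{deg} and A_•^ν are isomorphic. -/

import Mathlib

/-!
STATEMENT 3 (Kahn–Miyazaki–Saito–Yamazaki, "Motives with modulus III", Lemma B.3 (2)):
For a cubical object `A` in a pseudo-abelian category, with
`d_n := Σ_{i=1}^{n+1} (−1)^i (δ_{i,1}^{n*} − δ_{i,0}^{n*}) : A_{n+1} → A_n`, one has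
`d ∘ d = 0`, so `(A_•, d)` is a chain complex; moreover `A_•^{deg}` (the images of
`⊕ p_i^*`) and `A_•^ν` (the kernels of `⊕ δ_{i,1}^*`) are subcomplexes, and the
complexes `A_•/A_•^{deg}` and `A_•^ν` are isomorphic (via the canonical comparison
`A^ν_n ↪ A_n ↠ A_n/A^{deg}_n`).
-/

open CategoryTheory CategoryTheory.Limits

universe v u

/-- A cubical object in `𝒜` (contravariant functor on the cube category `Cube`,
presented by its values on generators and the cubical identities); see Statement 2. -/
structure CubicalObject (𝒜 : Type u) [Category.{v} 𝒜] where
  X : ℕ → 𝒜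
  σ : ∀ (n : ℕ) (_ : ℕ), X n ⟶ X (n + 1)
  δ : ∀ (n : ℕ) (_ : ℕ) (_ : Bool), X (n + 1) ⟶ X n
  σ_δ : ∀ n i ε, 1 ≤ i → i ≤ n + 1 → σ n i ≫ δ n i ε = 𝟙 (X n)
  σ_σ : ∀ n i j, 1 ≤ i → i < j → j ≤ n + 2 →
    σ n i ≫ σ (n + 1) j = σ n (j - 1) ≫ σ (n + 1) i
  δ_δ : ∀ n i j ε ε', 1 ≤ i → i < j → j ≤ n + 2 →
    δ (n + 1) j ε' ≫ δ n i ε = δ (n + 1) i ε ≫ δ n (j - 1) ε'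
  σ_δ_lt : ∀ n i j ε, 1 ≤ i → i < j → j ≤ n + 2 →
    σ (n + 1) j ≫ δ (n + 1) i ε = δ n i ε ≫ σ n (j - 1)
  σ_δ_gt : ∀ n i j ε, 1 ≤ j → j < i → i ≤ n + 2 →
    σ (n + 1) j ≫ δ (n + 1) i ε = δ n (i - 1) ε ≫ σ n j

variable {𝒜 : Type u} [Category.{v} 𝒜] [Preadditive 𝒜] [HasFiniteBiproducts 𝒜]

/-- The differential `d_n = Σ_{i=1}^{n+1} (−1)^i (δ_{i,1}^{n*} − δ_{i,0}^{n*}) :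
A_{n+1} ⟶ A_n`. -/
noncomputable def cubeD (A : CubicalObject 𝒜) (n : ℕ) : A.X (n + 1) ⟶ A.X n :=
  ∑ i ∈ Finset.range (n + 1),
    ((-1 : ℤ) ^ (i + 1)) • (A.δ n (i + 1) true - A.δ n (i + 1) false)

/-- `⊕ p_i^{(n+1)*} : ⊕_{i=1}^{n+1} A_n ⟶ A_{n+1}`, whose image is `A_{n+1}^{deg}`. -/
noncomputable def cubeDeg (A : CubicalObject 𝒜) (n : ℕ) :
    (⨁ fun _ : Fin (n + 1) => A.X n) ⟶ A.X (n + 1) :=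
  biproduct.desc fun i => A.σ n (i.val + 1)

/-- `⊕ δ_{i,1}^{n*} : A_{n+1} ⟶ ⊕_{i=1}^{n+1} A_n`, whose kernel is `A_{n+1}^ν`. -/
noncomputable def cubeNu (A : CubicalObject 𝒜) (n : ℕ) :
    A.X (n + 1) ⟶ ⨁ fun _ : Fin (n + 1) => A.X n :=
  biproduct.lift fun i => A.δ n (i + 1) true

set_option linter.unusedSectionVars false

namespace CubeAux

/-- `e_j = 𝟙 - δ_{j,1}^* ≫ p_j^*` on `A_{n+1}`. -/
noncomputable def ee (A : CubicalObject 𝒜) (n j : ℕ) : A.X (n + 1) ⟶ A.X (n + 1) :=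
  𝟙 _ - A.δ n j true ≫ A.σ n j

/-- `EE a c = e_a ≫ e_{a+1} ≫ ⋯ ≫ e_{a+c-1}`. -/
noncomputable def EE (A : CubicalObject 𝒜) (n : ℕ) : ℕ → ℕ → (A.X (n + 1) ⟶ A.X (n + 1))
  | _, 0 => 𝟙 _
  | a, c + 1 => ee A n a ≫ EE A n (a + 1) c

lemma EE_succ (A : CubicalObject 𝒜) (n a c : ℕ) :
    EE A n a (c + 1) = ee A n a ≫ EE A n (a + 1) c := rfl

lemma ee_δ_self (A : CubicalObject 𝒜) (n i : ℕ) (h1 : 1 ≤ i) (h2 : i ≤ n + 1) :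
    ee A n i ≫ A.δ n i true = 0 := by
  rw [ee, Preadditive.sub_comp, Category.id_comp, Category.assoc, A.σ_δ n i true h1 h2,
    Category.comp_id, sub_self]

lemma σ_ee_self (A : CubicalObject 𝒜) (n i : ℕ) (h1 : 1 ≤ i) (h2 : i ≤ n + 1) :
    A.σ n i ≫ ee A n i = 0 := by
  rw [ee, Preadditive.comp_sub, Category.comp_id, ← Category.assoc, A.σ_δ n i true h1 h2,
    Category.id_comp, sub_self]

lemma ee_δ_comm (A : CubicalObject 𝒜) (n i j : ℕ) (h1 : 1 ≤ i) (h2 : i ≤ j) (h3 : j ≤ n + 1) :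
    ee A (n + 1) (j + 1) ≫ A.δ (n + 1) i true = A.δ (n + 1) i true ≫ ee A n j := by
  have hσδ := A.σ_δ_lt n i (j + 1) true h1 (by omega) (by omega)
  have hδδ := A.δ_δ n i (j + 1) true true h1 (by omega) (by omega)
  simp only [Nat.add_sub_cancel] at hσδ hδδ
  simp only [ee, Preadditive.sub_comp, Preadditive.comp_sub, Category.id_comp, Category.comp_id,
    Category.assoc, hσδ]
  rw [reassoc_of% hδδ]

lemma σ_ee_comm (A : CubicalObject 𝒜) (n i j : ℕ) (h1 : 1 ≤ j) (h2 : j ≤ i) (h3 : i ≤ n + 1) :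
    A.σ (n + 1) (i + 1) ≫ ee A (n + 1) j = ee A n j ≫ A.σ (n + 1) (i + 1) := by
  have hσδ := A.σ_δ_lt n j (i + 1) true h1 (by omega) (by omega)
  have hσσ := A.σ_σ n j (i + 1) h1 (by omega) (by omega)
  simp only [Nat.add_sub_cancel] at hσδ hσσ
  simp only [ee, Preadditive.sub_comp, Preadditive.comp_sub, Category.id_comp, Category.comp_id,
    Category.assoc]
  rw [reassoc_of% hσδ, hσσ]

lemma EE_split (A : CubicalObject 𝒜) (n : ℕ) :
    ∀ (c d a : ℕ), EE A n a (c + d) = EE A n a c ≫ EE A n (a + c) d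
  | 0, d, a => by simp [EE]
  | c + 1, d, a => by
    rw [show c + 1 + d = (c + d) + 1 from by omega, EE_succ, EE_succ,
      EE_split A n c d (a + 1), Category.assoc, show a + 1 + c = a + (c + 1) from by omega]

lemma EE_snoc (A : CubicalObject 𝒜) (n a c : ℕ) :
    EE A n a (c + 1) = EE A n a c ≫ ee A n (a + c) := by
  rw [EE_split A n c 1 a]
  simp [EE]

lemma EE_δ_comm (A : CubicalObject 𝒜) (n : ℕ) :
    ∀ (c a i : ℕ), 1 ≤ i → i ≤ a → a + c ≤ n + 2 →
      EE A (n + 1) (a + 1) c ≫ A.δ (n + 1) i true = A.δ (n + 1) i true ≫ EE A n a c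
  | 0, a, i, _, _, _ => by simp [EE]
  | c + 1, a, i, h1, h2, h3 => by
    rw [EE_succ, EE_succ, Category.assoc,
      EE_δ_comm A n c (a + 1) i h1 (by omega) (by omega),
      ← Category.assoc, ee_δ_comm A n i a h1 h2 (by omega), Category.assoc]

lemma σ_EE_comm (A : CubicalObject 𝒜) (n : ℕ) :
    ∀ (c a i : ℕ), 1 ≤ a → a + c ≤ i + 1 → i ≤ n + 1 →
      A.σ (n + 1) (i + 1) ≫ EE A (n + 1) a c = EE A n a c ≫ A.σ (n + 1) (i + 1)
  | 0, a, i, _, _, _ => by simp [EE]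
  | c + 1, a, i, h1, h2, h3 => by
    rw [EE_succ, EE_succ, ← Category.assoc, σ_ee_comm A n i a h1 (by omega) h3,
      Category.assoc, σ_EE_comm A n c (a + 1) i (by omega) (by omega) h3, Category.assoc]

lemma P_δ (A : CubicalObject 𝒜) (n i : ℕ) (h1 : 1 ≤ i) (h2 : i ≤ n + 1) :
    EE A n 1 (n + 1) ≫ A.δ n i true = 0 := by
  obtain ⟨k, rfl⟩ : ∃ k, i = k + 1 := ⟨i - 1, by omega⟩
  obtain ⟨c, hc⟩ : ∃ c, n + 1 = k + (1 + c) := ⟨n - k, by omega⟩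
  have hsplit : EE A n 1 (n + 1)
      = EE A n 1 k ≫ ee A n (k + 1) ≫ EE A n (k + 2) c := by
    rw [congrArg (EE A n 1) hc, EE_split A n k (1 + c) 1,
      show (1 : ℕ) + k = k + 1 from by omega,
      show (1 : ℕ) + c = c + 1 from by omega, EE_succ, show k + 1 + 1 = k + 2 from by omega]
  rw [hsplit]
  cases c with
  | zero =>
    show (EE A n 1 k ≫ ee A n (k + 1) ≫ 𝟙 _) ≫ A.δ n (k + 1) true = 0
    rw [Category.comp_id, Category.assoc, ee_δ_self A n (k + 1) (by omega) h2, comp_zero]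
  | succ m =>
    obtain ⟨p, rfl⟩ : ∃ p, n = p + 1 := ⟨n - 1, by omega⟩
    rw [Category.assoc, Category.assoc,
      EE_δ_comm A p (m + 1) (k + 1) (k + 1) (by omega) le_rfl (by omega),
      ← Category.assoc (ee A (p + 1) (k + 1)),
      ee_δ_self A (p + 1) (k + 1) (by omega) (by omega), zero_comp, comp_zero]

lemma σ_P (A : CubicalObject 𝒜) (n i : ℕ) (h1 : 1 ≤ i) (h2 : i ≤ n + 1) :
    A.σ n i ≫ EE A n 1 (n + 1) = 0 := by
  obtain ⟨k, rfl⟩ : ∃ k, i = k + 1 := ⟨i - 1, by omega⟩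
  obtain ⟨c, hc⟩ : ∃ c, n + 1 = k + (1 + c) := ⟨n - k, by omega⟩
  have hsplit : EE A n 1 (n + 1)
      = EE A n 1 k ≫ ee A n (k + 1) ≫ EE A n (k + 2) c := by
    rw [congrArg (EE A n 1) hc, EE_split A n k (1 + c) 1,
      show (1 : ℕ) + k = k + 1 from by omega,
      show (1 : ℕ) + c = c + 1 from by omega, EE_succ, show k + 1 + 1 = k + 2 from by omega]
  rw [hsplit]
  cases n with
  | zero =>
    obtain rfl : k = 0 := by omega
    show A.σ 0 1 ≫ 𝟙 _ ≫ ee A 0 1 ≫ EE A 0 2 c = 0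
    rw [Category.id_comp, ← Category.assoc, σ_ee_self A 0 1 (by omega) (by omega), zero_comp]
  | succ m =>
    rw [← Category.assoc, σ_EE_comm A m k 1 k (by omega) (by omega) (by omega),
      Category.assoc, ← Category.assoc (A.σ (m + 1) (k + 1)),
      σ_ee_self A (m + 1) (k + 1) (by omega) (by omega), zero_comp, comp_zero]

lemma comp_EE_self (A : CubicalObject 𝒜) (n : ℕ) {W : 𝒜} (f : W ⟶ A.X (n + 1))
    (hf : ∀ j, 1 ≤ j → j ≤ n + 1 → f ≫ A.δ n j true = 0) :
    ∀ (c a : ℕ), 1 ≤ a → a + c ≤ n + 2 → f ≫ EE A n a c = f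
  | 0, a, _, _ => Category.comp_id f
  | c + 1, a, h1, h2 => by
    have hfe : f ≫ ee A n a = f := by
      rw [ee, Preadditive.comp_sub, Category.comp_id, ← Category.assoc,
        hf a h1 (by omega), zero_comp, sub_zero]
    rw [EE_succ, ← Category.assoc, hfe, comp_EE_self A n f hf c (a + 1) (by omega) (by omega)]

lemma one_sub_EE_factor (A : CubicalObject 𝒜) (n : ℕ) :
    ∀ c, c ≤ n + 1 →
      ∃ t : A.X (n + 1) ⟶ ⨁ fun _ : Fin (n + 1) => A.X n,
        𝟙 (A.X (n + 1)) - EE A n 1 c = t ≫ cubeDeg A n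
  | 0, _ => ⟨0, by simp [EE]⟩
  | c + 1, h => by
    obtain ⟨t, ht⟩ := one_sub_EE_factor A n c (by omega)
    refine ⟨t + EE A n 1 c ≫ A.δ n (1 + c) true ≫
      biproduct.ι (fun _ : Fin (n + 1) => A.X n) ⟨c, by omega⟩, ?_⟩
    have hι : biproduct.ι (fun _ : Fin (n + 1) => A.X n) (⟨c, by omega⟩ : Fin (n + 1)) ≫
        cubeDeg A n = A.σ n (c + 1) := by
      simp [cubeDeg]
    have key : 𝟙 (A.X (n + 1)) - EE A n 1 (c + 1)
        = (𝟙 (A.X (n + 1)) - EE A n 1 c) + EE A n 1 c ≫ (A.δ n (1 + c) true ≫ A.σ n (1 + c)) := by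
      rw [EE_snoc, ee, Preadditive.comp_sub, Category.comp_id]
      abel
    rw [key, ht, Preadditive.add_comp]
    congr 1
    rw [Category.assoc, Category.assoc, hι, show (1 : ℕ) + c = c + 1 from by omega]


lemma δδ_comm (A : CubicalObject 𝒜) (n a b : ℕ) (ε ε' : Bool)
    (h1 : 1 ≤ b) (h2 : b ≤ a) (h3 : a ≤ n + 1) :
    A.δ (n + 1) (a + 1) ε' ≫ A.δ n b ε = A.δ (n + 1) b ε ≫ A.δ n a ε' := by
  have h := A.δ_δ n b (a + 1) ε ε' h1 (by omega) (by omega)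
  simpa using h

lemma D_comm (A : CubicalObject 𝒜) (n a b : ℕ) (h1 : 1 ≤ b) (h2 : b ≤ a) (h3 : a ≤ n + 1) :
    (A.δ (n + 1) (a + 1) true - A.δ (n + 1) (a + 1) false) ≫ (A.δ n b true - A.δ n b false)
    = (A.δ (n + 1) b true - A.δ (n + 1) b false) ≫ (A.δ n a true - A.δ n a false) := by
  simp only [Preadditive.sub_comp, Preadditive.comp_sub]
  rw [δδ_comm A n a b true true h1 h2 h3, δδ_comm A n a b false true h1 h2 h3,
    δδ_comm A n a b true false h1 h2 h3, δδ_comm A n a b false false h1 h2 h3]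
  abel

lemma d_squared (A : CubicalObject 𝒜) (n : ℕ) : cubeD A (n + 1) ≫ cubeD A n = 0 := by
  have key : ∑ p ∈ Finset.range (n + 2) ×ˢ Finset.range (n + 1),
      ((-1 : ℤ) ^ (p.1 + p.2)) •
        ((A.δ (n + 1) (p.1 + 1) true - A.δ (n + 1) (p.1 + 1) false) ≫
          (A.δ n (p.2 + 1) true - A.δ n (p.2 + 1) false)) = 0 := by
    refine Finset.sum_involution
      (fun p _ => if p.2 < p.1 then (p.2, p.1 - 1) else (p.2 + 1, p.1)) ?_ ?_ ?_ ?_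
    · rintro ⟨i, j⟩ hp
      simp only [Finset.mem_product, Finset.mem_range] at hp
      by_cases h : j < i
      · simp only [if_pos h]
        obtain ⟨k, rfl⟩ : ∃ k, i = k + 1 := ⟨i - 1, by omega⟩
        simp only [Nat.add_sub_cancel]
        rw [D_comm A n (k + 1) (j + 1) (by omega) (by omega) (by omega),
          show ((-1 : ℤ)) ^ (k + 1 + j) = -((-1 : ℤ) ^ (j + k)) from by
            rw [show k + 1 + j = (j + k) + 1 from by omega, pow_succ]; ring,
          neg_smul, neg_add_cancel]
      · simp only [if_neg h]
        rw [D_comm A n (j + 1) (i + 1) (by omega) (by omega) (by omega),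
          show ((-1 : ℤ)) ^ (j + 1 + i) = -((-1 : ℤ) ^ (i + j)) from by
            rw [show j + 1 + i = (i + j) + 1 from by omega, pow_succ]; ring,
          neg_smul, add_neg_cancel]
    · rintro ⟨i, j⟩ hp _
      by_cases h : j < i <;> simp [h, Prod.ext_iff] <;> omega
    · rintro ⟨i, j⟩ hp
      simp only [Finset.mem_product, Finset.mem_range] at hp ⊢
      by_cases h : j < i <;> simp [h] <;> omega
    · rintro ⟨i, j⟩ hp
      by_cases h : j < i
      · have h2 : ¬ (i - 1 < j) := by omega
        simp [h, h2, Prod.ext_iff]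
        all_goals omega
      · have h2 : i < j + 1 := by omega
        simp [h, h2, Prod.ext_iff]
        all_goals omega
  rw [Finset.sum_product] at key
  rw [cubeD, cubeD, Preadditive.sum_comp, ← key]
  refine Finset.sum_congr rfl fun i _ => ?_
  rw [Preadditive.comp_sum]
  refine Finset.sum_congr rfl fun j _ => ?_
  rw [Preadditive.zsmul_comp, Preadditive.comp_zsmul, smul_smul, ← pow_add,
    show (i + 1) + (j + 1) = (i + j) + 2 from by omega, pow_add]
  norm_num

lemma ker_ι_δ (A : CubicalObject 𝒜) (n b : ℕ) [HasKernel (cubeNu A n)]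
    (h1 : 1 ≤ b) (h2 : b ≤ n + 1) :
    kernel.ι (cubeNu A n) ≫ A.δ n b true = 0 := by
  have h : kernel.ι (cubeNu A n) ≫ cubeNu A n ≫
      biproduct.π (fun _ : Fin (n + 1) => A.X n) ⟨b - 1, by omega⟩ = 0 := by
    rw [← Category.assoc, kernel.condition, zero_comp]
  rw [show cubeNu A n ≫ biproduct.π (fun _ : Fin (n + 1) => A.X n) ⟨b - 1, by omega⟩
      = A.δ n ((⟨b - 1, by omega⟩ : Fin (n + 1)).val + 1) true from biproduct.lift_π _ _] at h
  simpa [show b - 1 + 1 = b from by omega] using h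

lemma ker_dδ (A : CubicalObject 𝒜) (n k : ℕ) [HasKernel (cubeNu A (n + 1))]
    (h3 : 1 ≤ k) (h4 : k ≤ n + 1) :
    kernel.ι (cubeNu A (n + 1)) ≫ cubeD A (n + 1) ≫ A.δ n k true = 0 := by
  have hterm : ∀ a (ε : Bool), 1 ≤ a → a ≤ n + 2 →
      kernel.ι (cubeNu A (n + 1)) ≫ A.δ (n + 1) a ε ≫ A.δ n k true = 0 := by
    intro a ε ha1 ha2
    rcases lt_or_ge k a with h | h
    · have hδδ := A.δ_δ n k a true ε h3 h (by omega)
      rw [hδδ, ← Category.assoc, ker_ι_δ A (n + 1) k h3 (by omega), zero_comp]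
    · have hδδ := A.δ_δ n a (k + 1) ε true ha1 (by omega) (by omega)
      simp only [Nat.add_sub_cancel] at hδδ
      rw [← hδδ, ← Category.assoc, ker_ι_δ A (n + 1) (k + 1) (by omega) (by omega), zero_comp]
  rw [cubeD, Preadditive.sum_comp, Preadditive.comp_sum]
  refine Finset.sum_eq_zero fun i hi => ?_
  simp only [Finset.mem_range] at hi
  simp only [Preadditive.zsmul_comp, Preadditive.comp_zsmul, Preadditive.sub_comp,
    Preadditive.comp_sub, Category.assoc]
  rw [hterm (i + 1) true (by omega) (by omega), hterm (i + 1) false (by omega) (by omega),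
    sub_self, smul_zero]

lemma σ_d_factor (A : CubicalObject 𝒜) (n jv : ℕ) (hjv : jv ≤ n + 1) :
    ∃ g : A.X (n + 1) ⟶ ⨁ fun _ : Fin (n + 1) => A.X n,
      A.σ (n + 1) (jv + 1) ≫ cubeD A (n + 1) = g ≫ cubeDeg A n := by
  have hterm : ∀ b ∈ Finset.range (n + 2),
      ∃ g : A.X (n + 1) ⟶ ⨁ fun _ : Fin (n + 1) => A.X n,
        A.σ (n + 1) (jv + 1) ≫ (((-1 : ℤ) ^ (b + 1)) •
          (A.δ (n + 1) (b + 1) true - A.δ (n + 1) (b + 1) false)) = g ≫ cubeDeg A n := by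
    intro b hb
    simp only [Finset.mem_range] at hb
    rcases lt_trichotomy b jv with h | h | h
    · obtain ⟨m, rfl⟩ : ∃ m, jv = m + 1 := ⟨jv - 1, by omega⟩
      refine ⟨((-1 : ℤ) ^ (b + 1)) • ((A.δ n (b + 1) true - A.δ n (b + 1) false) ≫
        biproduct.ι (fun _ : Fin (n + 1) => A.X n) ⟨m, by omega⟩), ?_⟩
      have h1' := A.σ_δ_lt n (b + 1) (m + 1 + 1) true (by omega) (by omega) (by omega)
      have h2' := A.σ_δ_lt n (b + 1) (m + 1 + 1) false (by omega) (by omega) (by omega)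
      simp only [Nat.add_sub_cancel] at h1' h2'
      have hι : biproduct.ι (fun _ : Fin (n + 1) => A.X n) (⟨m, by omega⟩ : Fin (n + 1)) ≫
          cubeDeg A n = A.σ n (m + 1) := by simp [cubeDeg]
      rw [Preadditive.comp_zsmul, Preadditive.comp_sub, h1', h2']
      simp only [Preadditive.zsmul_comp, Preadditive.sub_comp, Category.assoc, hι]
    · subst h
      refine ⟨0, ?_⟩
      have e1 := A.σ_δ (n + 1) (b + 1) true (by omega) (by omega)
      have e2 := A.σ_δ (n + 1) (b + 1) false (by omega) (by omega)
      rw [Preadditive.comp_zsmul, Preadditive.comp_sub, e1, e2, sub_self, smul_zero, zero_comp]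
    · refine ⟨((-1 : ℤ) ^ (b + 1)) • ((A.δ n b true - A.δ n b false) ≫
        biproduct.ι (fun _ : Fin (n + 1) => A.X n) ⟨jv, by omega⟩), ?_⟩
      have h1' := A.σ_δ_gt n (b + 1) (jv + 1) true (by omega) (by omega) (by omega)
      have h2' := A.σ_δ_gt n (b + 1) (jv + 1) false (by omega) (by omega) (by omega)
      simp only [Nat.add_sub_cancel] at h1' h2'
      have hι : biproduct.ι (fun _ : Fin (n + 1) => A.X n) (⟨jv, by omega⟩ : Fin (n + 1)) ≫
          cubeDeg A n = A.σ n (jv + 1) := by simp [cubeDeg]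
      rw [Preadditive.comp_zsmul, Preadditive.comp_sub, h1', h2']
      simp only [Preadditive.zsmul_comp, Preadditive.sub_comp, Category.assoc, hι]
  choose g hg using hterm
  refine ⟨∑ b ∈ (Finset.range (n + 2)).attach, g b.1 b.2, ?_⟩
  rw [cubeD, Preadditive.comp_sum, Preadditive.sum_comp,
    ← Finset.sum_attach (Finset.range (n + 2)) (fun b => A.σ (n + 1) (jv + 1) ≫
      (((-1 : ℤ) ^ (b + 1)) • (A.δ (n + 1) (b + 1) true - A.δ (n + 1) (b + 1) false)))]
  exact Finset.sum_congr rfl fun b _ => hg b.1 b.2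

lemma P_nu (A : CubicalObject 𝒜) (n : ℕ) : EE A n 1 (n + 1) ≫ cubeNu A n = 0 := by
  refine biproduct.hom_ext _ _ fun j => ?_
  simp only [cubeNu, Category.assoc, biproduct.lift_π, zero_comp]
  exact P_δ A n (j.val + 1) (by omega) (by omega)

lemma Deg_P (A : CubicalObject 𝒜) (n : ℕ) : cubeDeg A n ≫ EE A n 1 (n + 1) = 0 := by
  refine biproduct.hom_ext' _ _ fun j => ?_
  simp only [cubeDeg, biproduct.ι_desc_assoc, comp_zero]
  exact σ_P A n (j.val + 1) (by omega) (by omega)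

end CubeAux

open CubeAux

theorem cubical_complex_and_normalized
    [IsIdempotentComplete 𝒜] (A : CubicalObject 𝒜)
    [∀ n, HasKernel (cubeNu A n)] [∀ n, HasImage (cubeDeg A n)]
    [∀ n, HasCokernel (cubeDeg A n)] :
    -- `(A_•, d)` is a chain complex
    (∀ n, cubeD A (n + 1) ≫ cubeD A n = 0) ∧
    -- `A_•^ν` is a subcomplex: the differential restricts along the kernel inclusions
    (∃ dν : ∀ n, (kernel (cubeNu A (n + 1)) ⟶ kernel (cubeNu A n)),
      ∀ n, kernel.ι (cubeNu A (n + 1)) ≫ cubeD A (n + 1) =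
        dν n ≫ kernel.ι (cubeNu A n)) ∧
    -- `A_•^{deg}` is a subcomplex: the differential restricts along the image inclusions
    (∃ ddeg : ∀ n, (image (cubeDeg A (n + 1)) ⟶ image (cubeDeg A n)),
      ∀ n, image.ι (cubeDeg A (n + 1)) ≫ cubeD A (n + 1) =
        ddeg n ≫ image.ι (cubeDeg A n)) ∧
    -- the canonical comparison `A^ν_n → A_n → A_n/A^{deg}_n` is an isomorphism,
    -- i.e. the complexes `A_•/A_•^{deg}` and `A_•^ν` are isomorphic
    (∀ n, IsIso (kernel.ι (cubeNu A n) ≫ cokernel.π (cubeDeg A n))) := by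
  refine ⟨fun n => d_squared A n, ?_, ?_, ?_⟩
  · -- the normalized part is a subcomplex
    have hcond : ∀ n, (kernel.ι (cubeNu A (n + 1)) ≫ cubeD A (n + 1)) ≫ cubeNu A n = 0 := by
      intro n
      refine biproduct.hom_ext _ _ fun j => ?_
      simp only [Category.assoc, zero_comp]
      rw [show cubeNu A n ≫ biproduct.π (fun _ : Fin (n + 1) => A.X n) j
        = A.δ n (j.val + 1) true from biproduct.lift_π _ _]
      exact ker_dδ A n (j.val + 1) (by omega) (by omega)
    exact ⟨fun n => kernel.lift _ _ (hcond n), fun n => (kernel.lift_ι _ _ _).symm⟩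
  · -- the degenerate part is a subcomplex
    have h3 : ∀ n, ∃ dd : image (cubeDeg A (n + 1)) ⟶ image (cubeDeg A n),
        image.ι (cubeDeg A (n + 1)) ≫ cubeD A (n + 1) = dd ≫ image.ι (cubeDeg A n) := by
      intro n
      have hPP : EE A (n + 1) 1 (n + 1 + 1) ≫ EE A (n + 1) 1 (n + 1 + 1)
          = EE A (n + 1) 1 (n + 1 + 1) :=
        comp_EE_self A (n + 1) _ (fun j h1 h2 => P_δ A (n + 1) j h1 h2) (n + 1 + 1) 1
          (by omega) (by omega)
      have hQQ : (𝟙 (A.X (n + 1 + 1)) - EE A (n + 1) 1 (n + 1 + 1)) ≫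
          (𝟙 (A.X (n + 1 + 1)) - EE A (n + 1) 1 (n + 1 + 1))
          = 𝟙 (A.X (n + 1 + 1)) - EE A (n + 1) 1 (n + 1 + 1) := by
        simp only [Preadditive.sub_comp, Preadditive.comp_sub, Category.id_comp,
          Category.comp_id, hPP]
        abel
      obtain ⟨Y, iY, eY, hie, hei⟩ := IsIdempotentComplete.idempotents_split _ _ hQQ
      have hiQ : iY ≫ (𝟙 (A.X (n + 1 + 1)) - EE A (n + 1) 1 (n + 1 + 1)) = iY := by
        rw [← hei, ← Category.assoc, hie, Category.id_comp]
      have hiP : iY ≫ EE A (n + 1) 1 (n + 1 + 1) = 0 := by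
        rw [Preadditive.comp_sub, Category.comp_id] at hiQ
        exact sub_eq_self.mp hiQ
      haveI : IsSplitMono iY := IsSplitMono.mk' ⟨eY, hie⟩
      have hDegP : cubeDeg A (n + 1) ≫ EE A (n + 1) 1 (n + 1 + 1) = 0 := Deg_P A (n + 1)
      let F : MonoFactorisation (cubeDeg A (n + 1)) :=
        { I := Y, m := iY, e := cubeDeg A (n + 1) ≫ eY,
          fac := by
            rw [Category.assoc, hei, Preadditive.comp_sub, Category.comp_id, hDegP, sub_zero] }
      have hlift2 : image.lift F ≫ iY = image.ι (cubeDeg A (n + 1)) := image.lift_fac F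
      have hιP : image.ι (cubeDeg A (n + 1)) ≫ EE A (n + 1) 1 (n + 1 + 1) = 0 := by
        rw [← hlift2, Category.assoc, hiP, comp_zero]
      obtain ⟨t, ht⟩ := one_sub_EE_factor A (n + 1) (n + 1 + 1) le_rfl
      have hι2 : image.ι (cubeDeg A (n + 1))
          = (image.ι (cubeDeg A (n + 1)) ≫ t) ≫ cubeDeg A (n + 1) := by
        rw [Category.assoc, ← ht, Preadditive.comp_sub, Category.comp_id, hιP, sub_zero]
      choose g hg using fun j : Fin (n + 1 + 1) => σ_d_factor A n j.val (by omega)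
      have hw : cubeDeg A (n + 1) ≫ cubeD A (n + 1) = biproduct.desc g ≫ cubeDeg A n := by
        refine biproduct.hom_ext' _ _ fun j => ?_
        rw [show cubeDeg A (n + 1)
            = biproduct.desc (fun i : Fin (n + 1 + 1) => A.σ (n + 1) (i.val + 1)) from rfl]
        simp only [biproduct.ι_desc_assoc]
        exact hg j
      refine ⟨(image.ι (cubeDeg A (n + 1)) ≫ t ≫ biproduct.desc g) ≫
        factorThruImage (cubeDeg A n), ?_⟩
      rw [Category.assoc, image.fac]
      calc image.ι (cubeDeg A (n + 1)) ≫ cubeD A (n + 1)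
          = ((image.ι (cubeDeg A (n + 1)) ≫ t) ≫ cubeDeg A (n + 1)) ≫ cubeD A (n + 1) := by
            rw [← hι2]
        _ = (image.ι (cubeDeg A (n + 1)) ≫ t) ≫ cubeDeg A (n + 1) ≫ cubeD A (n + 1) := by
            rw [Category.assoc]
        _ = (image.ι (cubeDeg A (n + 1)) ≫ t) ≫ biproduct.desc g ≫ cubeDeg A n := by rw [hw]
        _ = (image.ι (cubeDeg A (n + 1)) ≫ t ≫ biproduct.desc g) ≫ cubeDeg A n := by
            simp only [Category.assoc]
    exact ⟨fun n => (h3 n).choose, fun n => (h3 n).choose_spec⟩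
  · -- the comparison map is an isomorphism
    intro n
    have hPν := P_nu A n
    have hDegP := Deg_P A n
    have hκδ : ∀ j, 1 ≤ j → j ≤ n + 1 → kernel.ι (cubeNu A n) ≫ A.δ n j true = 0 :=
      fun j h1 h2 => ker_ι_δ A n j h1 h2
    obtain ⟨t, ht⟩ := one_sub_EE_factor A n (n + 1) le_rfl
    have hu : kernel.lift (cubeNu A n) (EE A n 1 (n + 1)) hPν ≫ kernel.ι (cubeNu A n)
        = EE A n 1 (n + 1) := kernel.lift_ι _ _ _
    have hDegu : cubeDeg A n ≫ kernel.lift (cubeNu A n) (EE A n 1 (n + 1)) hPν = 0 := by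
      rw [← cancel_mono (kernel.ι (cubeNu A n)), Category.assoc, hu, zero_comp, hDegP]
    refine ⟨⟨cokernel.desc _ (kernel.lift (cubeNu A n) (EE A n 1 (n + 1)) hPν) hDegu, ?_, ?_⟩⟩
    · rw [← cancel_mono (kernel.ι (cubeNu A n))]
      simp only [Category.assoc, cokernel.π_desc, Category.id_comp, hu]
      exact comp_EE_self A n (kernel.ι (cubeNu A n)) hκδ (n + 1) 1 (by omega) (by omega)
    · rw [← cancel_epi (cokernel.π (cubeDeg A n)), Category.comp_id, ← Category.assoc,
        cokernel.π_desc, ← Category.assoc, hu]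
      have hP1 : EE A n 1 (n + 1) = 𝟙 (A.X (n + 1)) - t ≫ cubeDeg A n := by
        rw [← ht]; abel
      rw [hP1, Preadditive.sub_comp, Category.id_comp, Category.assoc, cokernel.condition,
        comp_zero, sub_zero]
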